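/- arXiv:1411.6737 — 2 statements merged into one kernel-verified Lean document; each statement's English description precedes it below -/
import Mathlib

section
/- If H is a regular complex submanifold of a domain in ℂⁿ passing through z, and u is plurisubharmonic near z, then ν(u|_H, z) ≥ ν(u, z), i.e., the Lelong number can only increase under restriction to a submanifold. -/
open MeasureTheory Filter Metric Topology

noncomputable section

/-- `ℂⁿ` with its Euclidean structure. -/
abbrev Cn (n : ℕ) := EuclideanSpace ℂ (Fin n)

instance (n : ℕ) : MeasurableSpace (Cn n) := borel _
instance (n : ℕ) : BorelSpace (Cn n) := ⟨rfl⟩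
/-- Lebesgue measure on `ℂⁿ`, transported from the product measure. -/
instance (n : ℕ) : MeasureSpace (Cn n) :=
  ⟨Measure.map (WithLp.equiv 2 (Fin n → ℂ)).symm volume⟩

/-- The Lelong number of an `EReal`-valued function at a point:
`ν(u,x) = liminf_{z → x} u(z) / log ‖z - x‖`. -/
def lelong {F : Type*} [NormedAddCommGroup F] (u : F → EReal) (x : F) : EReal :=
  Filter.liminf (fun z => (((Real.log ‖z - x‖)⁻¹ : ℝ) : EReal) * u z) (𝓝[≠] x)

/-- Plurisubharmonicity on a set: upper semicontinuity, values `< +∞`, and the sub-mean-value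
inequality on every complex circle contained in the set (expressed via truncations from below,
so that the circle average is a genuine real integral; by monotone convergence this is
equivalent to the usual sub-mean-value inequality for the extended-real-valued integral). -/
def PshOn {F : Type*} [NormedAddCommGroup F] [NormedSpace ℂ F] (u : F → EReal) (Ω : Set F) : Prop :=
  UpperSemicontinuousOn u Ω ∧ (∀ z ∈ Ω, u z ≠ ⊤) ∧
  ∀ x ∈ Ω, ∀ v : F, ∀ r : ℝ, 0 < r →
    (∀ t : ℂ, ‖t‖ ≤ r → x + t • v ∈ Ω) →
    ∀ N : ℕ, u x ≤ (((2 * Real.pi)⁻¹ *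
      ∫ θ in (0:ℝ)..(2*Real.pi),
        ((u (x + ((r : ℂ) * Complex.exp (θ * Complex.I)) • v)) ⊔ ((-(N:ℝ) : ℝ) : EReal)).toReal : ℝ) : EReal)

/-- `e^{-2y}` for `y : EReal`, valued in `ℝ≥0∞`. -/
def eNeg2 (y : EReal) : ENNReal :=
  if y = ⊥ then ⊤ else ENNReal.ofReal (Real.exp ((-2) * y.toReal))

/-- `e^{-2u}` is integrable in some neighborhood of `x`. -/
def IntegrableENearAt {n : ℕ} (u : Cn n → EReal) (x : Cn n) : Prop :=
  ∃ U ∈ 𝓝 x, (∫⁻ z in U, eNeg2 (u z)) ≠ ⊤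

/-- The germ of `S` at `x₀` is the germ of a regular (smooth) complex hypersurface through `x₀`:
near `x₀`, `S` is the zero set of a holomorphic function with nonvanishing differential at `x₀`. -/
def IsSmoothHypersurfaceGermAt {n : ℕ} (S : Set (Cn n)) (x₀ : Cn n) : Prop :=
  ∃ V ∈ 𝓝 x₀, ∃ h : Cn n → ℂ, AnalyticOnNhd ℂ h V ∧ h x₀ = 0 ∧
    fderiv ℂ h x₀ ≠ 0 ∧ S ∩ V = {z ∈ V | h z = 0}

private lemma key_real {A B v t s : ℝ} (hA : A < 0) (hB : B < 0) (hBA : B ≤ s * A)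
    (ht : 0 ≤ t) (htv : t ≤ B⁻¹ * v) : s * t ≤ A⁻¹ * v := by
  have hv : v ≤ t * B := by
    have h := mul_le_mul_of_nonpos_right htv hB.le
    rwa [mul_comm B⁻¹ v, mul_assoc, inv_mul_cancel₀ hB.ne, mul_one] at h
  rw [inv_mul_eq_div, le_div_iff_of_neg hA]
  calc v ≤ t * B := hv
    _ ≤ t * (s * A) := mul_le_mul_of_nonneg_left hBA ht
    _ = s * t * A := by ring

private lemma key_ereal {x : EReal} {A B t s : ℝ} (hA : A < 0) (hB : B < 0) (hBA : B ≤ s * A)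
    (ht : 0 ≤ t) (hgt : (t : EReal) < ((B⁻¹ : ℝ) : EReal) * x) (hnt : x ≠ ⊤) :
    ((s * t : ℝ) : EReal) ≤ ((A⁻¹ : ℝ) : EReal) * x := by
  induction x with
  | bot =>
      rw [EReal.coe_mul_bot_of_neg (inv_lt_zero.mpr hA)]
      exact le_top
  | coe v =>
      rw [← EReal.coe_mul] at hgt ⊢
      rw [EReal.coe_le_coe_iff]
      rw [EReal.coe_lt_coe_iff] at hgt
      exact key_real hA hB hBA ht hgt.le
  | top => exact absurd rfl hnt

private lemma key_lower {x : EReal} {a M : ℝ} (ha : a < 0) (hxM : x < (M : EReal)) (hnt : x ≠ ⊤) :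
    ((a * M : ℝ) : EReal) ≤ ((a : ℝ) : EReal) * x := by
  induction x with
  | bot => rw [EReal.coe_mul_bot_of_neg ha]; exact le_top
  | coe v =>
      rw [← EReal.coe_mul, EReal.coe_le_coe_iff]
      have hvM : v ≤ M := (EReal.coe_lt_coe_iff.mp hxM).le
      exact mul_le_mul_of_nonpos_left hvM ha.le
  | top => exact absurd rfl hnt

set_option maxHeartbeats 1000000 in
/-- **Lelong numbers increase under restriction.** If `u` is plurisubharmonic near `z` and
`φ` is a holomorphic parametrization of a regular complex submanifold `H` through `z = φ 0`
(with injective differential at `0`), then `ν(u|_H, z) = ν(u ∘ φ, 0) ≥ ν(u, z)`. -/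
theorem lelong_le_restrict {n : ℕ} (U : Set (Cn n)) (hU : IsOpen U)
    (u : Cn n → EReal) (hu : PshOn u U) (z : Cn n) (hz : z ∈ U) :
    ∀ (d : ℕ) (φ : Cn d → Cn n) (W : Set (Cn d)), W ∈ 𝓝 (0 : Cn d) →
      AnalyticOnNhd ℂ φ W → φ 0 = z → Function.Injective (fderiv ℂ φ 0) →
      lelong u z ≤ lelong (fun w => u (φ w)) 0 := by
  intro d φ W hW hφ hφ0 hinj
  rcases Nat.eq_zero_or_pos d with hd | hd
  · -- degenerate case `d = 0`: the punctured neighborhood is trivial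
    subst hd
    have hsub : Subsingleton (Cn 0) := inferInstanceAs (Subsingleton (EuclideanSpace ℂ (Fin 0)))
    have hempty : ({(0 : Cn 0)}ᶜ : Set (Cn 0)) = ∅ := by
      ext x
      simp [Subsingleton.elim x 0]
    have hbot : (𝓝[≠] (0 : Cn 0)) = ⊥ := by
      rw [hempty, nhdsWithin_empty]
    rw [lelong, lelong, hbot, Filter.liminf_bot]
    exact le_top
  -- main case
  haveI : Nonempty (Fin d) := ⟨⟨0, hd⟩⟩
  haveI : Nontrivial (Cn d) := by
    refine ⟨EuclideanSpace.single ⟨0, hd⟩ (1 : ℂ), 0, fun h => ?_⟩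
    have := congrFun (congrArg (fun (x : Cn d) (i : Fin d) => x i) h) ⟨0, hd⟩
    simp at this
  haveI : NeBot (𝓝[≠] (0 : Cn d)) := Module.punctured_nhds_neBot ℂ (Cn d) 0
  set T := fderiv ℂ φ 0 with hT
  have hφ0an : AnalyticAt ℂ φ 0 := hφ 0 (mem_of_mem_nhds hW)
  have hcont : ContinuousAt φ 0 := hφ0an.continuousAt
  have hder : HasFDerivAt φ T 0 := hφ0an.differentiableAt.hasFDerivAt
  obtain ⟨K, hK0, hKa⟩ := T.toLinearMap.exists_antilipschitzWith (LinearMap.ker_eq_bot.mpr hinj)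
  have hK' : (0 : ℝ) < (K : ℝ) := hK0
  set c₁ : ℝ := ((K : ℝ))⁻¹ / 2 with hc₁def
  have hc₁ : 0 < c₁ := by positivity
  set c₂ : ℝ := ‖T‖ + c₁ with hc₂def
  have hc₂ : 0 < c₂ := by positivity
  set Cc : ℝ := max (Real.log c₂) 0 with hCcdef
  -- the little-o estimate
  have hev1 : ∀ᶠ w in 𝓝 (0 : Cn d), ‖φ w - z - T w‖ ≤ c₁ * ‖w‖ := by
    have h := hder.isLittleO.def hc₁
    simpa [hφ0] using h
  have hTlow : ∀ w : Cn d, (K : ℝ)⁻¹ * ‖w‖ ≤ ‖T w‖ := by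
    intro w
    have h := hKa.le_mul_dist w 0
    simp only [dist_eq_norm, sub_zero, map_zero, ContinuousLinearMap.coe_coe] at h
    calc (K : ℝ)⁻¹ * ‖w‖ ≤ (K : ℝ)⁻¹ * ((K : ℝ) * ‖T w‖) := by gcongr
      _ = ‖T w‖ := by field_simp
  have hbound : ∀ᶠ w in 𝓝 (0 : Cn d), c₁ * ‖w‖ ≤ ‖φ w - z‖ ∧ ‖φ w - z‖ ≤ c₂ * ‖w‖ := by
    filter_upwards [hev1] with w h1
    have h2 : ‖T w‖ ≤ ‖T‖ * ‖w‖ := T.le_opNorm w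
    have h3 := hTlow w
    have hKc : (K : ℝ)⁻¹ = 2 * c₁ := by rw [hc₁def]; ring
    rw [hKc] at h3
    constructor
    · have h4 : ‖T w‖ - ‖φ w - z‖ ≤ ‖T w - (φ w - z)‖ := norm_sub_norm_le _ _
      rw [norm_sub_rev (T w) (φ w - z)] at h4
      linarith
    · calc ‖φ w - z‖ = ‖T w + (φ w - z - T w)‖ := by congr 1; abel
        _ ≤ ‖T w‖ + ‖φ w - z - T w‖ := norm_add_le _ _
        _ ≤ ‖T‖ * ‖w‖ + c₁ * ‖w‖ := add_le_add h2 h1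
        _ = c₂ * ‖w‖ := by rw [hc₂def]; ring
  -- the upper bound `M` for `u` near `z`
  have huz : u z < ⊤ := lt_top_iff_ne_top.mpr (hu.2.1 z hz)
  obtain ⟨M, hM1, -⟩ := EReal.exists_between_coe_real huz
  have husc : ∀ᶠ w in 𝓝 z, u w < (M : EReal) := by
    have h := hu.1 z hz (M : EReal) hM1
    rwa [hU.nhdsWithin_eq hz] at h
  have hφt : Tendsto φ (𝓝 0) (𝓝 z) := by rw [← hφ0]; exact hcont
  have hevU : ∀ᶠ w in 𝓝 (0 : Cn d), φ w ∈ U := hφt (hU.mem_nhds hz)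
  have hevM : ∀ᶠ w in 𝓝 (0 : Cn d), u (φ w) < (M : EReal) := hφt.eventually husc
  have hnormt0 : Tendsto (fun w : Cn d => ‖φ w - z‖) (𝓝 0) (𝓝 0) := by
    have h : Tendsto (fun w : Cn d => φ w - z) (𝓝 0) (𝓝 0) := by
      simpa using hφt.sub_const z
    simpa using h.norm
  have hev1' : ∀ᶠ w in 𝓝 (0 : Cn d), ‖φ w - z‖ < 1 := hnormt0.eventually_lt_const one_pos
  have hevw1 : ∀ᶠ w in 𝓝 (0 : Cn d), ‖w‖ < 1 := by
    filter_upwards [Metric.ball_mem_nhds (0 : Cn d) one_pos] with w hw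
    simpa [mem_ball_zero_iff] using hw
  -- the combined eventual statement
  have hQ : ∀ᶠ w in 𝓝[≠] (0 : Cn d), w ≠ 0 ∧
      (c₁ * ‖w‖ ≤ ‖φ w - z‖ ∧ ‖φ w - z‖ ≤ c₂ * ‖w‖) ∧ ‖w‖ < 1 ∧ ‖φ w - z‖ < 1 ∧
      u (φ w) < (M : EReal) ∧ u (φ w) ≠ ⊤ := by
    have hall := (hbound.and (hevw1.and (hev1'.and (hevM.and hevU)))).filter_mono
      (nhdsWithin_le_nhds : 𝓝[≠] (0 : Cn d) ≤ 𝓝 0)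
    filter_upwards [hall, eventually_mem_nhdsWithin] with w hw hw0
    exact ⟨hw0, hw.1, hw.2.1, hw.2.2.1, hw.2.2.2.1, hu.2.1 _ hw.2.2.2.2⟩
  set A : Cn d → ℝ := fun w => Real.log ‖w‖ with hAdef
  set B : Cn d → ℝ := fun w => Real.log ‖φ w - z‖ with hBdef
  -- log norm tends to -∞
  have hnormt : Tendsto (fun w : Cn d => ‖w‖) (𝓝[≠] (0 : Cn d)) (𝓝[>] 0) := by
    rw [tendsto_nhdsWithin_iff]
    constructor
    · have h : Tendsto (fun w : Cn d => ‖w‖) (𝓝 0) (𝓝 0) := by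
        simpa using (continuous_norm.tendsto (0 : Cn d))
      exact h.mono_left nhdsWithin_le_nhds
    · filter_upwards [eventually_mem_nhdsWithin] with w hw
      exact norm_pos_iff.mpr hw
  have hAtend : Tendsto A (𝓝[≠] (0 : Cn d)) atBot :=
    Real.tendsto_log_nhdsGT_zero.comp hnormt
  have hAinv : Tendsto (fun w => (A w)⁻¹) (𝓝[≠] (0 : Cn d)) (𝓝 0) := by
    have h1 : Tendsto (fun w => -(A w)) (𝓝[≠] (0 : Cn d)) atTop := tendsto_neg_atBot_atTop.comp hAtend
    have h2 : Tendsto (fun w => (-(A w))⁻¹) (𝓝[≠] (0 : Cn d)) (𝓝 0) := tendsto_inv_atTop_zero.comp h1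
    have h3 := h2.neg
    simpa [inv_neg, neg_neg] using h3
  -- abbreviations for the two liminfs
  set Λ : EReal := liminf (fun w => (((A w)⁻¹ : ℝ) : EReal) * u (φ w)) (𝓝[≠] (0 : Cn d)) with hΛdef
  set L : EReal := liminf (fun w => (((B w)⁻¹ : ℝ) : EReal) * u (φ w)) (𝓝[≠] (0 : Cn d)) with hLdef
  have hlelong : lelong (fun w => u (φ w)) 0 = Λ := by
    simp only [lelong, sub_zero, hΛdef]
    rfl
  -- Step 1 : lelong u z ≤ L
  have hmap : Tendsto φ (𝓝[≠] (0 : Cn d)) (𝓝[≠] z) := by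
    rw [tendsto_nhdsWithin_iff]
    refine ⟨hφt.mono_left nhdsWithin_le_nhds, ?_⟩
    filter_upwards [hQ] with w hw
    have hlow := hw.2.1.1
    have hwpos : 0 < ‖w‖ := norm_pos_iff.mpr hw.1
    simp only [Set.mem_compl_iff, Set.mem_singleton_iff]
    intro hcontra
    rw [hcontra] at hlow
    simp only [sub_self, norm_zero] at hlow
    nlinarith
  have step1 : lelong u z ≤ L := by
    rw [lelong]
    calc liminf (fun w => (((Real.log ‖w - z‖)⁻¹ : ℝ) : EReal) * u w) (𝓝[≠] z)
        ≤ liminf (fun w => (((Real.log ‖w - z‖)⁻¹ : ℝ) : EReal) * u w) (map φ (𝓝[≠] (0 : Cn d))) :=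
          liminf_le_liminf_of_le hmap
      _ = L := (Filter.liminf_comp _ φ _).symm
  -- Step 2 : 0 ≤ Λ
  have hABfacts : ∀ᶠ w in 𝓝[≠] (0 : Cn d), A w < 0 ∧ B w < 0 ∧ B w ≤ Real.log c₂ + A w ∧
      u (φ w) < (M : EReal) ∧ u (φ w) ≠ ⊤ := by
    filter_upwards [hQ] with w hw
    obtain ⟨hw0, ⟨hlow, hup⟩, hw1, hφw1, hMlt, hnt⟩ := hw
    have hwpos : 0 < ‖w‖ := norm_pos_iff.mpr hw0
    have hφpos : 0 < ‖φ w - z‖ := lt_of_lt_of_le (by positivity) hlow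
    refine ⟨Real.log_neg hwpos hw1, Real.log_neg hφpos hφw1, ?_, hMlt, hnt⟩
    have h := Real.log_le_log hφpos hup
    rwa [Real.log_mul hc₂.ne' hwpos.ne'] at h
  have claim0 : (0 : EReal) ≤ Λ := by
    have h0' : Tendsto (fun w => (((A w)⁻¹ * M : ℝ) : EReal)) (𝓝[≠] (0 : Cn d)) (𝓝 (0 : EReal)) := by
      have h : Tendsto (fun w => (A w)⁻¹ * M) (𝓝[≠] (0 : Cn d)) (𝓝 0) := by
        simpa using hAinv.mul_const M
      have := EReal.tendsto_coe.mpr h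
      simpa using this
    have hle : ∀ᶠ w in 𝓝[≠] (0 : Cn d),
        (((A w)⁻¹ * M : ℝ) : EReal) ≤ (((A w)⁻¹ : ℝ) : EReal) * u (φ w) := by
      filter_upwards [hABfacts] with w hw
      exact key_lower (inv_lt_zero.mpr hw.1) hw.2.2.2.1 hw.2.2.2.2
    rw [hΛdef, ← h0'.liminf_eq]
    exact liminf_le_liminf hle
  -- Step 3 : every real 0 ≤ t < L satisfies t ≤ Λ
  have claim1 : ∀ t : ℝ, 0 ≤ t → (t : EReal) < L → (t : EReal) ≤ Λ := by
    intro t ht htL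
    have hev_t : ∀ᶠ w in 𝓝[≠] (0 : Cn d), (t : EReal) < (((B w)⁻¹ : ℝ) : EReal) * u (φ w) :=
      eventually_lt_of_lt_liminf htL
    have hst : ∀ s : ℝ, 0 < s → s < 1 → ((s * t : ℝ) : EReal) ≤ Λ := by
      intro s hs0 hs1
      have h1s : 0 < 1 - s := by linarith
      have hAev : ∀ᶠ w in 𝓝[≠] (0 : Cn d), A w ≤ -(Cc / (1 - s)) :=
        hAtend.eventually_le_atBot _
      refine le_liminf_of_le (by isBoundedDefault) ?_
      filter_upwards [hABfacts, hev_t, hAev] with w hw hgt hAb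
      obtain ⟨hA, hB, hBlog, hMlt, hnt⟩ := hw
      have hBA : B w ≤ s * A w := by
        have h2 : Real.log c₂ ≤ Cc := le_max_left _ _
        have h3 : Cc ≤ (1 - s) * (-(A w)) := by
          have h4 : Cc / (1 - s) ≤ -(A w) := by linarith
          calc Cc = Cc / (1 - s) * (1 - s) := by field_simp
            _ ≤ -(A w) * (1 - s) := mul_le_mul_of_nonneg_right h4 h1s.le
            _ = (1 - s) * (-(A w)) := by ring
        nlinarith
      exact key_ereal hA hB hBA ht hgt hnt
    by_contra hcon
    push_neg at hcon
    obtain ⟨q, hq1, hq2⟩ := EReal.exists_between_coe_real hcon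
    have hqt : q < t := EReal.coe_lt_coe_iff.mp hq2
    rcases eq_or_lt_of_le ht with h0 | h0t
    · exact absurd (lt_of_le_of_lt claim0 (by rw [← h0] at hcon; exact_mod_cast hcon)) (lt_irrefl _)
    · set s : ℝ := max (q / t) (1 / 2) with hsdef
      have hs1 : s < 1 := max_lt ((div_lt_one h0t).mpr hqt) (by norm_num)
      have hs0 : 0 < s := lt_of_lt_of_le (by norm_num) (le_max_right _ _)
      have hq_le : q ≤ s * t := by
        have h : q / t ≤ s := le_max_left _ _
        calc q = q / t * t := by field_simp
          _ ≤ s * t := mul_le_mul_of_nonneg_right h h0t.le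
      have h := hst s hs0 hs1
      have : (q : EReal) ≤ Λ := le_trans (by exact_mod_cast hq_le) h
      exact absurd (lt_of_le_of_lt this hq1) (lt_irrefl _)
  -- conclusion : L ≤ Λ
  have final : L ≤ Λ := by
    by_contra hfin
    push_neg at hfin
    obtain ⟨y, hy1, hy2⟩ := EReal.exists_between_coe_real hfin
    rcases le_or_gt 0 y with hy0 | hy0
    · exact absurd (claim1 y hy0 hy2) (not_le.mpr hy1)
    · have : Λ < (0 : EReal) := lt_trans hy1 (by exact_mod_cast hy0)
      exact absurd (lt_of_le_of_lt claim0 this) (lt_irrefl _)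
  rw [hlelong]
  exact le_trans step1 final
end
end

section
/- Let f be a holomorphic function on the unit disc Δ ⊂ ℂ with f(0) = 0 and f(a) = 1 for some a ∈ Δ with |a| < 1/6. Then ∫_Δ |f|² dλ > C₁ |a|^{-2}, where C₁ > 0 is an absolute constant independent of a and f, and λ denotes the Lebesgue area measure. -/
open MeasureTheory Filter Metric Topology

noncomputable section

section AuxLemmas
open Real

lemma circle_bound2 (f : ℂ → ℂ) (hf : DifferentiableOn ℂ f (ball (0:ℂ) 1))
    (h0 : f 0 = 0) (a : ℂ) (ha : f a = 1) (haa : ‖a‖ < 1/6)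
    (r : ℝ) (hr1 : 1/3 ≤ r) (hr2 : r ≤ 1/2)
    (hapos : 0 < ‖a‖) (hrpos : (0:ℝ) < r)
    (hfc : ContinuousOn f (sphere (0:ℂ) r))
    (habs : ∀ z ∈ sphere (0:ℂ) r, ‖z‖ = r)
    (hza : ∀ z ∈ sphere (0:ℂ) r, z ≠ a)
    (hz0 : ∀ z ∈ sphere (0:ℂ) r, z ≠ 0)
    (hci1 : CircleIntegrable (fun z => (z - a)⁻¹ • f z) 0 r)
    (hci2 : CircleIntegrable (fun z => (z - 0)⁻¹ • f z) 0 r)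
    (hsubint : (∮ z in C(0, r), ((z - a)⁻¹ • f z - (z - 0)⁻¹ • f z))
      = (2 * π * Complex.I : ℂ)) :
    π / (3 * ‖a‖) ≤ ∫ θ in (0:ℝ)..(2*π), ‖f (circleMap 0 r θ)‖ := by
  set g : ℂ → ℂ := fun z => (z - a)⁻¹ • f z - (z - 0)⁻¹ • f z with hg
  have hcig : CircleIntegrable g 0 r := hci1.sub hci2
  have hfcont : Continuous fun θ => ‖f (circleMap 0 r θ)‖ := by
    refine (hfc.comp_continuous (continuous_circleMap 0 r) ?_).norm
    intro θ; exact circleMap_mem_sphere 0 hrpos.le θ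
  have hIf : IntervalIntegrable (fun θ => ‖f (circleMap 0 r θ)‖) volume 0 (2*π) :=
    hfcont.intervalIntegrable _ _
  have key : (2*π) ≤ ∫ θ in (0:ℝ)..(2*π), 6 * ‖a‖ * ‖f (circleMap 0 r θ)‖ := by
    have e0 : ‖(2 * ↑π * Complex.I : ℂ)‖ = 2 * π := by
      simp [abs_of_nonneg Real.pi_pos.le]
    calc (2*π) = ‖(∮ z in C(0, r), g z)‖ := by rw [hsubint, e0]
    _ ≤ ∫ θ in (0:ℝ)..(2*π), ‖deriv (circleMap 0 r) θ • g (circleMap 0 r θ)‖ := by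
        rw [circleIntegral]
        exact intervalIntegral.norm_integral_le_integral_norm Real.two_pi_pos.le
    _ ≤ ∫ θ in (0:ℝ)..(2*π), 6 * ‖a‖ * ‖f (circleMap 0 r θ)‖ := by
        apply intervalIntegral.integral_mono_on Real.two_pi_pos.le hcig.out.norm
          ((hIf.const_mul _))
        intro θ _
        set z := circleMap 0 r θ with hzdef
        have hzs : z ∈ sphere (0:ℂ) r := circleMap_mem_sphere _ hrpos.le θ
        have hzr : ‖z‖ = r := habs z hzs
        have h1 : z - a ≠ 0 := sub_ne_zero.mpr (hza z hzs)
        have h2 : z ≠ 0 := hz0 z hzs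
        have hgz : g z = (a * ((z - a)⁻¹ * z⁻¹)) * f z := by
          rw [hg]; simp only [smul_eq_mul, sub_zero]
          rw [← sub_mul]; congr 1
          field_simp
          ring
        have hder : ‖deriv (circleMap 0 r) θ‖ = r := by
          simp [deriv_circleMap, abs_of_pos hrpos]
        rw [norm_smul, hder, hgz]
        have hinva : ‖z - a‖ ≥ 1/6 := by
          have h := norm_sub_norm_le z a
          simp only [hzr] at h
          linarith
        have hnormprod : ‖(a * ((z - a)⁻¹ * z⁻¹)) * f z‖
            = ‖a‖ * ((‖z - a‖)⁻¹ * r⁻¹) * ‖f z‖ := by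
          simp [map_mul, map_inv₀, hzr]
        rw [hnormprod]
        have hinv6 : (‖z - a‖)⁻¹ ≤ 6 := by
          rw [inv_le_comm₀ (by linarith) (by norm_num)]
          linarith
        have hfnn : (0:ℝ) ≤ ‖f z‖ := norm_nonneg _
        have hrr : r * r⁻¹ = 1 := mul_inv_cancel₀ hrpos.ne'
        calc r * (‖a‖ * ((‖z - a‖)⁻¹ * r⁻¹) * ‖f z‖)
            = (r * r⁻¹) * (‖a‖ * (‖z - a‖)⁻¹ * ‖f z‖) := by ring
        _ = ‖a‖ * (‖z - a‖)⁻¹ * ‖f z‖ := by rw [hrr]; ring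
        _ ≤ 6 * ‖a‖ * ‖f z‖ := by
            have h6 : ‖a‖ * (‖z - a‖)⁻¹ ≤ ‖a‖ * 6 :=
              mul_le_mul_of_nonneg_left hinv6 hapos.le
            nlinarith [mul_le_mul_of_nonneg_right h6 hfnn]
  rw [intervalIntegral.integral_const_mul] at key
  rw [div_le_iff₀ (by positivity)]
  nlinarith [key]

lemma circle_bound (f : ℂ → ℂ) (hf : DifferentiableOn ℂ f (ball (0:ℂ) 1))
    (h0 : f 0 = 0) (a : ℂ) (ha : f a = 1) (haa : ‖a‖ < 1/6)
    (r : ℝ) (hr1 : 1/3 ≤ r) (hr2 : r ≤ 1/2) :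
    π / (3 * ‖a‖) ≤ ∫ θ in (0:ℝ)..(2*π), ‖f (circleMap 0 r θ)‖ := by
  have hane : a ≠ 0 := by
    rintro rfl; rw [h0] at ha; exact one_ne_zero ha.symm
  have hapos : 0 < ‖a‖ := by
    simpa [norm_pos_iff] using hane
  have hrpos : (0:ℝ) < r := by linarith
  have hsub : closedBall (0:ℂ) r ⊆ ball (0:ℂ) 1 := closedBall_subset_ball (by linarith)
  have hd : DiffContOnCl ℂ f (ball (0:ℂ) r) := by
    apply DifferentiableOn.diffContOnCl
    rw [closure_ball (0:ℂ) hrpos.ne']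
    exact hf.mono hsub
  have hmema : a ∈ ball (0:ℂ) r := by
    simp only [mem_ball, Complex.dist_eq, sub_zero]
    calc ‖a‖ < 1/6 := haa
    _ < r := by linarith
  have hmem0 : (0:ℂ) ∈ ball (0:ℂ) r := by simpa [mem_ball] using hrpos
  have h1 : (∮ z in C(0, r), (z - a)⁻¹ • f z) = (2 * π * Complex.I : ℂ) • f a :=
    hd.circleIntegral_sub_inv_smul hmema
  have h2 : (∮ z in C(0, r), (z - 0)⁻¹ • f z) = (2 * π * Complex.I : ℂ) • f 0 :=
    hd.circleIntegral_sub_inv_smul hmem0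
  -- continuity of f on the sphere
  have hsphere : sphere (0:ℂ) r ⊆ ball (0:ℂ) 1 := sphere_subset_closedBall.trans hsub
  have hfc : ContinuousOn f (sphere (0:ℂ) r) := (hf.continuousOn).mono hsphere
  have habs : ∀ z ∈ sphere (0:ℂ) r, ‖z‖ = r := by
    intro z hz; simpa [Complex.dist_eq, sub_zero] using (mem_sphere.mp hz)
  have hza : ∀ z ∈ sphere (0:ℂ) r, z ≠ a := by
    intro z hz h; rw [h] at hz
    have := habs a hz; rw [this] at haa; linarith
  have hz0 : ∀ z ∈ sphere (0:ℂ) r, z ≠ 0 := by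
    intro z hz h; rw [h] at hz; have := habs 0 hz; simp at this; linarith
  have hci1 : CircleIntegrable (fun z => (z - a)⁻¹ • f z) 0 r := by
    apply ContinuousOn.circleIntegrable hrpos.le
    exact (ContinuousOn.inv₀ (by fun_prop) (fun z hz => sub_ne_zero.mpr (hza z hz))).smul hfc
  have hci2 : CircleIntegrable (fun z => (z - 0)⁻¹ • f z) 0 r := by
    apply ContinuousOn.circleIntegrable hrpos.le
    exact (ContinuousOn.inv₀ (by fun_prop) (fun z hz => sub_ne_zero.mpr (hz0 z hz))).smul hfc
  have hsubint : (∮ z in C(0, r), ((z - a)⁻¹ • f z - (z - 0)⁻¹ • f z))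
      = (2 * π * Complex.I : ℂ) := by
    rw [circleIntegral.integral_sub hci1 hci2, h1, h2, h0, ha]
    simp
  exact circle_bound2 f hf h0 a ha haa r hr1 hr2 hapos hrpos hfc habs hza hz0 hci1 hci2 hsubint


lemma circle_sq_bound (f : ℂ → ℂ) (hf : DifferentiableOn ℂ f (ball (0:ℂ) 1))
    (h0 : f 0 = 0) (a : ℂ) (ha : f a = 1) (haa : ‖a‖ < 1/6)
    (r : ℝ) (hr1 : 1/3 ≤ r) (hr2 : r ≤ 1/2) :
    π / (18 * ‖a‖ ^ 2) ≤ ∫ θ in (0:ℝ)..(2*π), ‖f (circleMap 0 r θ)‖^2 := by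
  have hane : a ≠ 0 := by
    rintro rfl; rw [h0] at ha; exact one_ne_zero ha.symm
  have hapos : 0 < ‖a‖ := by
    simpa [norm_pos_iff] using hane
  have hrpos : (0:ℝ) < r := by linarith
  have hA := circle_bound f hf h0 a ha haa r hr1 hr2
  have hsub : closedBall (0:ℂ) r ⊆ ball (0:ℂ) 1 := closedBall_subset_ball (by linarith)
  have hsphere : sphere (0:ℂ) r ⊆ ball (0:ℂ) 1 := sphere_subset_closedBall.trans hsub
  have hfc : ContinuousOn f (sphere (0:ℂ) r) := (hf.continuousOn).mono hsphere
  have hfcont : Continuous fun θ => ‖f (circleMap 0 r θ)‖ := by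
    refine (hfc.comp_continuous (continuous_circleMap 0 r) ?_).norm
    intro θ; exact circleMap_mem_sphere 0 hrpos.le θ
  set φ : ℝ → ℝ := fun θ => ‖f (circleMap 0 r θ)‖ with hφ
  set A : ℝ := ∫ θ in (0:ℝ)..(2*π), φ θ with hAdef
  set B : ℝ := ∫ θ in (0:ℝ)..(2*π), φ θ ^ 2 with hBdef
  have hint : IntervalIntegrable φ volume 0 (2*π) := hfcont.intervalIntegrable _ _
  have hint2 : IntervalIntegrable (fun θ => φ θ ^ 2) volume 0 (2*π) :=
    (hfcont.pow 2).intervalIntegrable _ _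
  have h0' : (0:ℝ) ≤ ∫ θ in (0:ℝ)..(2*π), (2*π*φ θ - A)^2 :=
    intervalIntegral.integral_nonneg Real.two_pi_pos.le (fun θ _ => sq_nonneg _)
  have hexp : (fun θ => (2*π*φ θ - A)^2)
      = fun θ => ((4*π^2) * (φ θ^2) - (4*π*A) * φ θ) + A^2 := by
    funext θ; ring
  rw [hexp, intervalIntegral.integral_add ((hint2.const_mul _).sub (hint.const_mul _))
      intervalIntegrable_const,
    intervalIntegral.integral_sub (hint2.const_mul _) (hint.const_mul _),
    intervalIntegral.integral_const_mul, intervalIntegral.integral_const_mul,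
    intervalIntegral.integral_const] at h0'
  rw [← hAdef, ← hBdef] at h0'
  have hcs : A^2 ≤ 2*π*B := by
    simp only [smul_eq_mul] at h0'
    nlinarith [Real.pi_pos]
  -- from hA : π / (3 * |a|) ≤ A
  have hA' : π ≤ A * (3 * ‖a‖) := by
    rwa [div_le_iff₀ (by positivity)] at hA
  have hAsq : π * π ≤ (A * (3 * ‖a‖)) * (A * (3 * ‖a‖)) :=
    mul_self_le_mul_self Real.pi_pos.le hA'
  rw [div_le_iff₀ (by positivity)]
  nlinarith [Real.pi_pos, hapos, mul_le_mul_of_nonneg_left hcs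
    (by positivity : (0:ℝ) ≤ 9 * ‖a‖ ^ 2), sq_nonneg A]

lemma circle_lintegral_bound (f : ℂ → ℂ) (hf : DifferentiableOn ℂ f (ball (0:ℂ) 1))
    (h0 : f 0 = 0) (a : ℂ) (ha : f a = 1) (haa : ‖a‖ < 1/6)
    (r : ℝ) (hr1 : 1/3 ≤ r) (hr2 : r ≤ 1/2) :
    ENNReal.ofReal (π / (18 * ‖a‖ ^ 2))
      ≤ ∫⁻ θ in Set.Ioo (-π) π, (‖f (circleMap 0 r θ)‖₊ : ENNReal)^2 := by
  have hB := circle_sq_bound f hf h0 a ha haa r hr1 hr2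
  have hrpos : (0:ℝ) < r := by linarith
  have hsub : closedBall (0:ℂ) r ⊆ ball (0:ℂ) 1 := closedBall_subset_ball (by linarith)
  have hsphere : sphere (0:ℂ) r ⊆ ball (0:ℂ) 1 := sphere_subset_closedBall.trans hsub
  have hfc : ContinuousOn f (sphere (0:ℂ) r) := (hf.continuousOn).mono hsphere
  have hfcont : Continuous fun θ => ‖f (circleMap 0 r θ)‖ := by
    refine (hfc.comp_continuous (continuous_circleMap 0 r) ?_).norm
    intro θ; exact circleMap_mem_sphere 0 hrpos.le θ
  set F : ℝ → ℝ := fun θ => ‖f (circleMap 0 r θ)‖^2 with hFdef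
  have hFc : Continuous F := hfcont.pow 2
  have hper : Function.Periodic F (2*π) :=
    (periodic_circleMap 0 r).comp (fun z => ‖f z‖^2)
  have hshift : ∫ θ in (-π)..(π), F θ = ∫ θ in (0:ℝ)..(2*π), F θ := by
    have h := hper.intervalIntegral_add_eq (-π) 0
    have h2 : -π + 2*π = π := by ring
    rw [h2, zero_add] at h
    exact h
  have hB' : π / (18 * ‖a‖ ^ 2) ≤ ∫ θ in Set.Ioo (-π) π, F θ := by
    rw [← integral_Ioc_eq_integral_Ioo,
      ← intervalIntegral.integral_of_le (by linarith [Real.pi_pos] : -π ≤ π), hshift]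
    exact hB
  have hInt : IntegrableOn F (Set.Ioo (-π) π) :=
    (hFc.integrableOn_Icc).mono_set Set.Ioo_subset_Icc_self
  calc ENNReal.ofReal (π / (18 * ‖a‖ ^ 2))
      ≤ ENNReal.ofReal (∫ θ in Set.Ioo (-π) π, F θ) := ENNReal.ofReal_le_ofReal hB'
  _ = ∫⁻ θ in Set.Ioo (-π) π, ENNReal.ofReal (F θ) :=
      ofReal_integral_eq_lintegral_ofReal hInt
        (Filter.Eventually.of_forall fun θ => by positivity)
  _ = ∫⁻ θ in Set.Ioo (-π) π, (‖f (circleMap 0 r θ)‖₊ : ENNReal)^2 := by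
      apply lintegral_congr; intro θ
      rw [hFdef]
      rw [ENNReal.ofReal_pow (norm_nonneg _), ofReal_norm, enorm_eq_nnnorm]

set_option maxHeartbeats 1000000 in
lemma main_bound (f : ℂ → ℂ) (hf : DifferentiableOn ℂ f (ball (0:ℂ) 1))
    (h0 : f 0 = 0) (a : ℂ) (ha : f a = 1) (haa : ‖a‖ < 1/6) :
    ENNReal.ofReal (π / (324 * ‖a‖ ^ 2))
      ≤ ∫⁻ z in ball (0:ℂ) 1, (‖f z‖₊ : ENNReal)^2 := by
  set g : ℂ → ENNReal := fun z => (‖f z‖₊ : ENNReal)^2 with hg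
  set e := Complex.measurableEquivRealProd with he
  have mp : MeasurePreserving (⇑e.symm) volume volume :=
    Complex.volume_preserving_equiv_real_prod.symm e
  have hsetL : (∫⁻ p in ⇑e.symm ⁻¹' (ball (0:ℂ) 1), g (e.symm p)) = ∫⁻ z in ball (0:ℂ) 1, g z :=
    mp.setLIntegral_comp_preimage_emb e.symm.measurableEmbedding g _
  set T : Set (ℝ × ℝ) := Set.Ioo (1/3:ℝ) (1/2) ×ˢ Set.Ioo (-π) π with hT
  have hTm : MeasurableSet T := measurableSet_Ioo.prod measurableSet_Ioo
  have hTsub : T ⊆ polarCoord.target := by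
    rintro ⟨x, y⟩ ⟨hx, hy⟩
    refine ⟨?_, hy⟩
    simp only [Set.mem_Ioi]
    linarith [hx.1]
  have hcm : ∀ p : ℝ × ℝ, (e.symm (polarCoord.symm p) : ℂ) = circleMap 0 p.1 p.2 := by
    intro p
    apply Complex.ext <;>
      simp [he, Complex.measurableEquivRealProd_symm_apply, polarCoord_symm_apply,
        circleMap, Complex.exp_mul_I, Complex.cos_ofReal_re, Complex.sin_ofReal_re]
  -- change of variables
  set B : ℝ × ℝ → ℝ × ℝ →L[ℝ] ℝ × ℝ := fun p =>
    LinearMap.toContinuousLinearMap (Matrix.toLin (Module.Basis.finTwoProd ℝ) (Module.Basis.finTwoProd ℝ)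
      !![Real.cos p.2, -p.1 * Real.sin p.2; Real.sin p.2, p.1 * Real.cos p.2]) with hB
  have B_det : ∀ p : ℝ × ℝ, (B p).det = p.1 := by
    intro p
    conv_rhs => rw [← one_mul p.1, ← Real.cos_sq_add_sin_sq p.2]
    simp only [hB, neg_mul, LinearMap.det_toContinuousLinearMap, LinearMap.det_toLin,
      Matrix.det_fin_two_of, sub_neg_eq_add]
    ring
  have hder : ∀ p ∈ T, HasFDerivWithinAt polarCoord.symm (B p) T p := fun p _ =>
    (hasFDerivAt_polarCoord_symm p).hasFDerivWithinAt
  have hinj : Set.InjOn polarCoord.symm T := by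
    have h1 : Set.InjOn polarCoord.symm polarCoord.symm.source := polarCoord.symm.injOn
    rw [OpenPartialHomeomorph.symm_source] at h1
    exact h1.mono hTsub
  have hcov : (∫⁻ p in polarCoord.symm '' T, g (e.symm p))
      = ∫⁻ p in T, ENNReal.ofReal |(B p).det| * g (e.symm (polarCoord.symm p)) :=
    lintegral_image_eq_lintegral_abs_det_fderiv_mul volume hTm hder hinj _
  -- the image is inside the preimage of the ball
  have himg : polarCoord.symm '' T ⊆ ⇑e.symm ⁻¹' (ball (0:ℂ) 1) := by
    rintro - ⟨p, hp, rfl⟩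
    simp only [Set.mem_preimage, mem_ball, Complex.dist_eq, sub_zero]
    rw [hcm p]
    have : ‖circleMap 0 p.1 p.2‖ = |p.1| := by
      simpa using abs_circleMap_zero p.1 p.2
    rw [this, abs_of_pos (by linarith [hp.1.1] : (0:ℝ) < p.1)]
    linarith [hp.1.2]
  -- rewrite the integrand on T
  have hTcongr : (∫⁻ p in T, ENNReal.ofReal |(B p).det| * g (e.symm (polarCoord.symm p)))
      = ∫⁻ p in T, ENNReal.ofReal (p.1 * ‖f (circleMap 0 p.1 p.2)‖^2) := by
    apply setLIntegral_congr_fun hTm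
    intro p hp
    beta_reduce
    rw [B_det p, hcm p, abs_of_pos (by linarith [hp.1.1] : (0:ℝ) < p.1)]
    rw [ENNReal.ofReal_mul (by linarith [hp.1.1] : (0:ℝ) ≤ p.1)]
    congr 1
    rw [hg, ENNReal.ofReal_pow (norm_nonneg _), ofReal_norm, enorm_eq_nnnorm]
  -- Tonelli
  have hanz : a ≠ 0 := by rintro rfl; rw [h0] at ha; exact one_ne_zero ha.symm
  have hapos : 0 < ‖a‖ := by simpa [norm_pos_iff] using hanz
  have hcontmap : Continuous (fun p : ℝ × ℝ => circleMap 0 p.1 p.2) := by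
    have h : Continuous fun p : ℝ × ℝ =>
        (0:ℂ) + (p.1:ℂ) * Complex.exp ((p.2:ℂ) * Complex.I) := by fun_prop
    simpa [circleMap] using h
  have hmaps : ∀ p ∈ T, circleMap 0 p.1 p.2 ∈ ball (0:ℂ) 1 := by
    intro p hp
    simp only [mem_ball, Complex.dist_eq, sub_zero]
    have h1 : ‖circleMap 0 p.1 p.2‖ = |p.1| := by
      simpa using abs_circleMap_zero p.1 p.2
    rw [h1, abs_of_pos (by linarith [hp.1.1] : (0:ℝ) < p.1)]
    linarith [hp.1.2]
  have hcont : ContinuousOn (fun p : ℝ × ℝ => p.1 * ‖f (circleMap 0 p.1 p.2)‖^2) T := by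
    apply ContinuousOn.mul continuousOn_fst
    apply ContinuousOn.pow
    apply ContinuousOn.norm
    exact hf.continuousOn.comp hcontmap.continuousOn hmaps
  have hmeas : AEMeasurable (fun p : ℝ × ℝ => ENNReal.ofReal (p.1 * ‖f (circleMap 0 p.1 p.2)‖^2))
      ((volume.restrict (Set.Ioo (1/3:ℝ) (1/2))).prod (volume.restrict (Set.Ioo (-π) π))) := by
    rw [Measure.prod_restrict, ← Measure.volume_eq_prod]
    exact (hcont.aemeasurable hTm).ennreal_ofReal
  have htonelli : (∫⁻ p in T, ENNReal.ofReal (p.1 * ‖f (circleMap 0 p.1 p.2)‖^2))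
      = ∫⁻ x in Set.Ioo (1/3:ℝ) (1/2), ∫⁻ y in Set.Ioo (-π) π,
          ENNReal.ofReal (x * ‖f (circleMap 0 x y)‖^2) := by
    rw [hT, Measure.volume_eq_prod, ← Measure.prod_restrict]
    exact lintegral_prod _ hmeas
  have hinner : ∀ x ∈ Set.Ioo (1/3:ℝ) (1/2),
      ENNReal.ofReal (1/3 * (π / (18 * ‖a‖ ^ 2)))
        ≤ ∫⁻ y in Set.Ioo (-π) π, ENNReal.ofReal (x * ‖f (circleMap 0 x y)‖^2) := by
    intro x hx
    have hcb := circle_lintegral_bound f hf h0 a ha haa x hx.1.le hx.2.le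
    have hsplit : (∫⁻ y in Set.Ioo (-π) π, ENNReal.ofReal (x * ‖f (circleMap 0 x y)‖^2))
        = ENNReal.ofReal x * ∫⁻ y in Set.Ioo (-π) π, (‖f (circleMap 0 x y)‖₊ : ENNReal)^2 := by
      rw [← lintegral_const_mul' _ _ ENNReal.ofReal_ne_top]
      apply lintegral_congr; intro y
      rw [ENNReal.ofReal_mul (by linarith [hx.1] : (0:ℝ) ≤ x)]
      congr 1
      rw [ENNReal.ofReal_pow (norm_nonneg _), ofReal_norm, enorm_eq_nnnorm]
    rw [hsplit]
    calc ENNReal.ofReal (1/3 * (π / (18 * ‖a‖ ^ 2)))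
        = ENNReal.ofReal (1/3) * ENNReal.ofReal (π / (18 * ‖a‖ ^ 2)) :=
          ENNReal.ofReal_mul (by norm_num)
    _ ≤ ENNReal.ofReal x * ∫⁻ y in Set.Ioo (-π) π, (‖f (circleMap 0 x y)‖₊ : ENNReal)^2 :=
          mul_le_mul' (ENNReal.ofReal_le_ofReal hx.1.le) hcb
  have houter : ENNReal.ofReal (1/3 * (π / (18 * ‖a‖ ^ 2)))
        * volume (Set.Ioo (1/3:ℝ) (1/2))
      ≤ ∫⁻ x in Set.Ioo (1/3:ℝ) (1/2), ∫⁻ y in Set.Ioo (-π) π,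
          ENNReal.ofReal (x * ‖f (circleMap 0 x y)‖^2) := by
    rw [← setLIntegral_const]
    exact setLIntegral_mono' measurableSet_Ioo hinner
  have hvol : volume (Set.Ioo (1/3:ℝ) (1/2)) = ENNReal.ofReal (1/6) := by
    rw [Real.volume_Ioo]; norm_num
  have hfinal : ENNReal.ofReal (π / (324 * ‖a‖ ^ 2))
      = ENNReal.ofReal (1/3 * (π / (18 * ‖a‖ ^ 2))) * volume (Set.Ioo (1/3:ℝ) (1/2)) := by
    rw [hvol, ← ENNReal.ofReal_mul (by positivity)]
    congr 1
    have hs : ‖a‖ ^ 2 ≠ 0 := by positivity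
    field_simp
    try ring
    try tauto
  calc ENNReal.ofReal (π / (324 * ‖a‖ ^ 2))
      = ENNReal.ofReal (1/3 * (π / (18 * ‖a‖ ^ 2)))
        * volume (Set.Ioo (1/3:ℝ) (1/2)) := hfinal
  _ ≤ ∫⁻ x in Set.Ioo (1/3:ℝ) (1/2), ∫⁻ y in Set.Ioo (-π) π,
        ENNReal.ofReal (x * ‖f (circleMap 0 x y)‖^2) := houter
  _ = ∫⁻ p in T, ENNReal.ofReal (p.1 * ‖f (circleMap 0 p.1 p.2)‖^2) := htonelli.symm
  _ = ∫⁻ p in T, ENNReal.ofReal |(B p).det| * g (e.symm (polarCoord.symm p)) := hTcongr.symm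
  _ = ∫⁻ p in polarCoord.symm '' T, g (e.symm p) := hcov.symm
  _ ≤ ∫⁻ p in ⇑e.symm ⁻¹' (ball (0:ℂ) 1), g (e.symm p) := lintegral_mono_set himg
  _ = ∫⁻ z in ball (0:ℂ) 1, g z := hsetL

end AuxLemmas

/-- **A lower bound for `L²` norms on the disc.** There is an absolute constant `C₁ > 0` such
that every holomorphic function `f` on the unit disc with `f 0 = 0` and `f a = 1` for some
`|a| < 1/6` satisfies `∫_Δ |f|² > C₁ |a|⁻²`. -/
theorem l2_lower_bound_disc :
    ∃ C₁ : ℝ, 0 < C₁ ∧ ∀ (f : ℂ → ℂ) (a : ℂ),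
      DifferentiableOn ℂ f (ball (0 : ℂ) 1) → f 0 = 0 → f a = 1 → ‖a‖ < 1/6 →
      ENNReal.ofReal (C₁ / ‖a‖ ^ 2) <
        ∫⁻ z in ball (0 : ℂ) 1, (‖f z‖₊ : ENNReal) ^ 2 := by
  refine ⟨1/200, by norm_num, ?_⟩
  intro f a hf h0 ha haa
  have hanz : a ≠ 0 := by rintro rfl; rw [h0] at ha; exact one_ne_zero ha.symm
  have hapos : 0 < ‖a‖ := by simpa [norm_pos_iff] using hanz
  have hmb := main_bound f hf h0 a ha haa
  apply lt_of_lt_of_le _ hmb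
  rw [ENNReal.ofReal_lt_ofReal_iff (by positivity)]
  rw [div_lt_div_iff₀ (by positivity) (by positivity)]
  have hs : (0:ℝ) < ‖a‖ ^ 2 := by positivity
  nlinarith [Real.pi_gt_three, hs]
end
end
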